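/- arXiv:1509.04116 — 3 statements merged into one kernel-verified Lean document; each statement's English description precedes it below -/
import Mathlib

section
/- (Soundness of the slave product) Fix an fLTL\GU formula φ with Rec = {ξ_1,…,ξ_n}, and let P be the product of the slave automata LTSs for ξ_1,…,ξ_n. For every infinite word w and every R ⊆ Rec: if w ∈ L(P(R)) then R ⊆ R(w); consequently w ⊨ ⋀_{Fξ ∈ R} GFξ ∧ ⋀_{Gξ ∈ R} FGξ ∧ ⋀_{G^{⋈p}_ext ξ ∈ R} G^{⋈p}_ext ξ. -/
open Filter

attribute [local instance] Classical.propDecidable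

noncomputable section

namespace Paper

/-- Comparison extremes: limit inferior or limit superior. -/
inductive Ext where
  | inf : Ext
  | sup : Ext

/-- Comparison operators `≥` and `>`. -/
inductive Cmp where
  | ge : Cmp
  | gt : Cmp

/-- Interpretation of a comparison operator on reals. -/
def Cmp.rel : Cmp → ℝ → ℝ → Prop
  | .ge, x, y => x ≥ y
  | .gt, x, y => x > y

/-- Cesàro averages of a real sequence. -/
def cesaro (q : ℕ → ℝ) (n : ℕ) : ℝ := (∑ j ∈ Finset.range n, q j) / (n : ℝ)

/-- `lr_inf`/`lr_sup`: liminf/limsup of the Cesàro averages. -/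
def lr : Ext → (ℕ → ℝ) → ℝ
  | .inf, q => Filter.liminf (cesaro q) Filter.atTop
  | .sup, q => Filter.limsup (cesaro q) Filter.atTop

/-- Real-valued indicator of a proposition. -/
def ind (P : Prop) : ℝ := if P then 1 else 0

/-- Formulas of frequency LTL (fLTL) over atomic propositions `Ap`,
in negation normal form. -/
inductive FLTL (Ap : Type) where
  | tt : FLTL Ap
  | ff : FLTL Ap
  | atom (a : Ap) : FLTL Ap
  | natom (a : Ap) : FLTL Ap
  | conj (φ ψ : FLTL Ap) : FLTL Ap
  | disj (φ ψ : FLTL Ap) : FLTL Ap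
  | next (φ : FLTL Ap) : FLTL Ap
  | fut (φ : FLTL Ap) : FLTL Ap
  | glob (φ : FLTL Ap) : FLTL Ap
  | untl (φ ψ : FLTL Ap) : FLTL Ap
  | freq (e : Ext) (c : Cmp) (p : ℚ) (φ : FLTL Ap) : FLTL Ap

/-- Infinite words over the alphabet `2^Ap`. -/
abbrev Word (Ap : Type) := ℕ → Set Ap

/-- The suffix `w^k` of an infinite word. -/
def suffixW {Ap : Type} (w : Word Ap) (k : ℕ) : Word Ap := fun i => w (k + i)

/-- Semantics of fLTL: `Sat φ w` means `w ⊨ φ`. -/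
def Sat {Ap : Type} : FLTL Ap → Word Ap → Prop
  | .tt, _ => True
  | .ff, _ => False
  | .atom a, w => a ∈ w 0
  | .natom a, w => a ∉ w 0
  | .conj φ ψ, w => Sat φ w ∧ Sat ψ w
  | .disj φ ψ, w => Sat φ w ∨ Sat ψ w
  | .next φ, w => Sat φ (suffixW w 1)
  | .fut φ, w => ∃ k, Sat φ (suffixW w k)
  | .glob φ, w => ∀ k, Sat φ (suffixW w k)
  | .untl φ ψ, w => ∃ k, Sat ψ (suffixW w k) ∧ ∀ j < k, Sat φ (suffixW w j)
  | .freq e c p φ, w => c.rel (lr e (fun i => ind (Sat φ (suffixW w i)))) (p : ℝ)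

/-- `U`-free formulas (the grammar `ξ` of the fragment). -/
def UFree {Ap : Type} : FLTL Ap → Prop
  | .conj φ ψ => UFree φ ∧ UFree ψ
  | .disj φ ψ => UFree φ ∧ UFree ψ
  | .next φ => UFree φ
  | .fut φ => UFree φ
  | .glob φ => UFree φ
  | .freq _ _ _ φ => UFree φ
  | .untl _ _ => False
  | _ => True

/-- The fragment fLTL∖GU: no `U` inside the scope of `G` or `G^{⋈p}_ext`. -/
def InFrag {Ap : Type} : FLTL Ap → Prop
  | .conj φ ψ => InFrag φ ∧ InFrag ψ
  | .disj φ ψ => InFrag φ ∧ InFrag ψ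
  | .next φ => InFrag φ
  | .fut φ => InFrag φ
  | .untl φ ψ => InFrag φ ∧ InFrag ψ
  | .glob φ => UFree φ
  | .freq _ _ _ φ => UFree φ
  | _ => True

/-- One-step unfolding `Unf`. -/
def unf {Ap : Type} : FLTL Ap → FLTL Ap
  | .conj φ ψ => .conj (unf φ) (unf ψ)
  | .disj φ ψ => .disj (unf φ) (unf ψ)
  | .fut φ => .disj (unf φ) (.next (.fut φ))
  | .glob φ => .conj (unf φ) (.next (.glob φ))
  | .untl φ ψ => .disj (unf ψ) (.conj (unf φ) (.next (.untl φ ψ)))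
  | .freq e c p φ => .conj .tt (.next (.freq e c p φ))
  | φ => φ

/-- The next-step operator `ψ[ν]` for a letter `ν ⊆ Ap`. -/
def step {Ap : Type} : FLTL Ap → Set Ap → FLTL Ap
  | .conj φ ψ, ν => .conj (step φ ν) (step ψ ν)
  | .disj φ ψ, ν => .disj (step φ ν) (step ψ ν)
  | .atom a, ν => if a ∈ ν then .tt else .ff
  | .natom a, ν => if a ∈ ν then .ff else .tt
  | .next φ, _ => φ
  | φ, _ => φ

/-- Non-Boolean formulas: those that are not conjunctions or disjunctions. -/
def nonBool {Ap : Type} : FLTL Ap → Prop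
  | .conj _ _ => False
  | .disj _ _ => False
  | _ => True

/-- Extension of a propositional assignment (on non-Boolean formulas)
through conjunction and disjunction; `tt` and `ff` get their truth values. -/
def evalA {Ap : Type} (A : FLTL Ap → Prop) : FLTL Ap → Prop
  | .tt => True
  | .ff => False
  | .conj φ ψ => evalA A φ ∧ evalA A ψ
  | .disj φ ψ => evalA A φ ∨ evalA A ψ
  | φ => A φ

/-- Propositional provability `Φ ⊢ ψ`. -/
def pproves {Ap : Type} (Φ : Set (FLTL Ap)) (ψ : FLTL Ap) : Prop :=
  ∀ A : FLTL Ap → Prop, (∀ χ ∈ Φ, evalA A χ) → evalA A ψ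

/-- Propositional equivalence `≡_P`. -/
def pequiv {Ap : Type} (φ ψ : FLTL Ap) : Prop :=
  pproves {φ} ψ ∧ pproves {ψ} φ

/-- The set of subformulas of a formula (including itself). -/
def subf {Ap : Type} : FLTL Ap → Set (FLTL Ap)
  | .conj φ ψ => insert (.conj φ ψ) (subf φ ∪ subf ψ)
  | .disj φ ψ => insert (.disj φ ψ) (subf φ ∪ subf ψ)
  | .next φ => insert (.next φ) (subf φ)
  | .fut φ => insert (.fut φ) (subf φ)
  | .glob φ => insert (.glob φ) (subf φ)
  | .untl φ ψ => insert (.untl φ ψ) (subf φ ∪ subf ψ)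
  | .freq e c p φ => insert (.freq e c p φ) (subf φ)
  | φ => {φ}

/-- `sf(φ)`: the set of non-Boolean subformulas of `φ`. -/
def sfSet {Ap : Type} (φ : FLTL Ap) : Set (FLTL Ap) := {ψ ∈ subf φ | nonBool ψ}

/-- Formulas of the shapes `Fξ`, `Gξ`, `G^{⋈p}_ext ξ`. -/
def isRecShape {Ap : Type} : FLTL Ap → Prop
  | .fut _ => True
  | .glob _ => True
  | .freq _ _ _ _ => True
  | _ => False

/-- `Rec`: the set of `F`-, `G`-, and `G^{⋈p}_ext`-subformulas of `φ`. -/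
def RecSet {Ap : Type} (φ : FLTL Ap) : Set (FLTL Ap) := {ψ ∈ subf φ | isRecShape ψ}

/-- The defining condition of membership in `R(w)`. -/
def RsatCond {Ap : Type} (w : Word Ap) : FLTL Ap → Prop
  | .fut ξ => Sat (.glob (.fut ξ)) w
  | .glob ξ => Sat (.fut (.glob ξ)) w
  | .freq e c p ξ => Sat (.freq e c p ξ) w
  | _ => False

/-- `R(w)`: elements of `Rec` eventually always satisfied on `w`. -/
def Rsat {Ap : Type} (φ : FLTL Ap) (w : Word Ap) : Set (FLTL Ap) :=
  {ψ ∈ RecSet φ | RsatCond w ψ}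

/-- The threshold `T(w)`: the smallest `T` such that for all `t ≥ T` every
formula of `R(w)` holds at `w^t` and every formula of `Rec ∖ R(w)` fails at `w^t`. -/
def threshold {Ap : Type} (φ : FLTL Ap) (w : Word Ap) : ℕ :=
  sInf {T : ℕ | ∀ t, T ≤ t →
    (∀ ψ ∈ Rsat φ w, Sat ψ (suffixW w t)) ∧
    (∀ ψ ∈ RecSet φ, ψ ∉ Rsat φ w → ¬ Sat ψ (suffixW w t))}

/-- Sinks of slave transition systems: `ψ[ν] = ψ` for every letter `ν`. -/
def isSink {Ap : Type} (ψ : FLTL Ap) : Prop := ∀ ν : Set Ap, step ψ ν = ψ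

/-- Run of the slave LTS `S(ξ)` on a finite word: undefined (`none`) as soon as
a transition from a sink would be needed. -/
def slaveRunList {Ap : Type} : FLTL Ap → List (Set Ap) → Option (FLTL Ap)
  | ψ, [] => some ψ
  | ψ, ν :: rest => if isSink ψ then none else slaveRunList (step ψ ν) rest

/-- The finite word `w[i] w[i+1] ⋯ w[i+len-1]`. -/
def segWord {Ap : Type} (w : Word Ap) (i len : ℕ) : List (Set Ap) :=
  (List.range len).map (fun k => w (i + k))

/-- `S(ξ)(w[i..j])`: the state of the slave LTS after reading `w[i]⋯w[j]`. -/
def readSeg {Ap : Type} (ξ : FLTL Ap) (w : Word Ap) (i j : ℕ) : Option (FLTL Ap) :=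
  slaveRunList ξ (segWord w i (j + 1 - i))

/-- The state, at time `n`, of the slave token born at time `b`
(having read `w[b]⋯w[n-1]`). -/
def tokState {Ap : Type} (ξ : FLTL Ap) (w : Word Ap) (b n : ℕ) : Option (FLTL Ap) :=
  slaveRunList ξ (segWord w b (n - b))

/-- `Sat(R)`: positions from which the slave run reaches an `R`-provable state. -/
def SatSet {Ap : Type} (R : Set (FLTL Ap)) (ξ : FLTL Ap) (w : Word Ap) : Set ℕ :=
  {i | ∃ j ≥ i, ∃ ψ, readSeg ξ w i j = some ψ ∧ pproves R ψ}

/-- The token (subset-construction) run of the slave automata for `ξ` on `w`: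
at each step all non-sink tokens move and a fresh token is put on `ξ`. -/
def tokenSet {Ap : Type} (ξ : FLTL Ap) (w : Word Ap) : ℕ → Set (FLTL Ap)
  | 0 => {ξ}
  | n + 1 => insert ξ ((fun ψ => step ψ (w n)) '' {ψ ∈ tokenSet ξ w n | ¬ isSink ψ})

/-- Acceptance of the Büchi slave automaton `S_GF(ξ,R)`:
infinitely often some token lies in an accepting (R-provable) sink. -/
def buchiAcc {Ap : Type} (R : Set (FLTL Ap)) (ξ : FLTL Ap) (w : Word Ap) : Prop :=
  ∃ᶠ n in atTop, ∃ ψ ∈ tokenSet ξ w n, isSink ψ ∧ pproves R ψ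

/-- Acceptance of the co-Büchi slave automaton `S_FG(ξ,R)`:
only finitely often some token lies in a rejecting (non-R-provable) sink. -/
def coBuchiAcc {Ap : Type} (R : Set (FLTL Ap)) (ξ : FLTL Ap) (w : Word Ap) : Prop :=
  ∀ᶠ n in atTop, ¬ ∃ ψ ∈ tokenSet ξ w n, isSink ψ ∧ ¬ pproves R ψ

/-- The counting function (state of the mean-payoff slave automaton) at time `n`:
the number of tokens currently in state `ψ`. -/
def tokenCount {Ap : Type} (ξ : FLTL Ap) (w : Word Ap) (n : ℕ) (ψ : FLTL Ap) : ℕ :=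
  ((Finset.range (n + 1)).filter (fun b => tokState ξ w b n = some ψ)).card

/-- The reward `r(R)` of a counting state: total number of tokens in
accepting (R-provable) sinks. -/
def mpRewardFn {Ap : Type} (R : Set (FLTL Ap)) (f : FLTL Ap → ℕ) : ℝ :=
  ∑' ψ : {χ : FLTL Ap // isSink χ ∧ pproves R χ}, (f ψ.1 : ℝ)

/-- Acceptance of the mean-payoff slave automaton `S_{G^{⋈p}_ext}(ξ,R)`. -/
def mpAcc {Ap : Type} (R : Set (FLTL Ap)) (ξ : FLTL Ap) (w : Word Ap)
    (e : Ext) (c : Cmp) (p : ℚ) : Prop :=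
  c.rel (lr e (fun n => mpRewardFn R (tokenCount ξ w n))) (p : ℝ)

/-- Acceptance of the slave automaton for a formula of `Rec`, with assumptions `R`. -/
def slaveAccept {Ap : Type} (R : Set (FLTL Ap)) (w : Word Ap) : FLTL Ap → Prop
  | .fut ξ => buchiAcc R ξ w
  | .glob ξ => coBuchiAcc R ξ w
  | .freq e c p ξ => mpAcc R ξ w e c p
  | _ => True

/-- `w ∈ L(P(R))`: the product of the slaves accepts `w` with the condition
`Acc(R) = ⋀_{ξ ∈ R} Acc_ξ(R)`. -/
def productAccept {Ap : Type} (R : Set (FLTL Ap)) (w : Word Ap) : Prop :=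
  ∀ ψ ∈ R, slaveAccept R w ψ

/-- The run of the master transition system on `w`. -/
def masterRun {Ap : Type} (φ : FLTL Ap) (w : Word Ap) : ℕ → FLTL Ap
  | 0 => φ
  | n + 1 => step (unf (masterRun φ w n)) (w n)

/-- The propositional substitution `χ[X/ff]`: replace each non-Boolean
formula belonging to `X` by `ff`. -/
def substFF {Ap : Type} (X : Set (FLTL Ap)) : FLTL Ap → FLTL Ap
  | .conj φ ψ => .conj (substFF X φ) (substFF X ψ)
  | .disj φ ψ => .disj (substFF X φ) (substFF X ψ)
  | φ => if φ ∈ X then .ff else φ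

/-- The master acceptance condition `Acc_M(R)`: eventually, the current master
formula is provable from `R` together with all tokens of the slaves of
`G`-formulas of `R`, with `Rec ∖ R` substituted by `ff`. -/
def masterAcc {Ap : Type} (φ : FLTL Ap) (R : Set (FLTL Ap)) (w : Word Ap) : Prop :=
  ∀ᶠ n in atTop,
    pproves
      (R ∪ ⋃ (ξ : FLTL Ap) (_ : FLTL.glob ξ ∈ R),
        substFF (RecSet φ \ R) '' tokenSet ξ w n)
      (masterRun φ w n)

/-- `w ∈ L(A)` for the final automaton `A` (master × slave product) of `φ`. -/
def finalAccept {Ap : Type} (φ : FLTL Ap) (w : Word Ap) : Prop :=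
  ∃ R ⊆ RecSet φ, masterAcc φ R w ∧ productAccept R w

/-! ### Auxiliary development -/

section Aux

variable {Ap : Type}

lemma suffixW_suffixW (w : Word Ap) (a b : ℕ) :
    suffixW (suffixW w a) b = suffixW w (a + b) := by
  funext i; simp [suffixW, Nat.add_assoc]

lemma suffixW_zero (w : Word Ap) : suffixW w 0 = w := by
  funext i; simp [suffixW]

/-! #### Analysis lemmas -/

lemma liminf_le_liminf_aux (u v c : ℕ → ℝ)
    (hu0 : ∀ n, 0 ≤ u n) (hv1 : ∀ n, v n ≤ 1)
    (hc : ∀ ε > (0:ℝ), ∀ᶠ n in atTop, c n ≤ ε)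
    (h : ∀ᶠ n in atTop, u n ≤ v n + c n) :
    liminf u atTop ≤ liminf v atTop := by
  rw [liminf_eq, liminf_eq]
  have hbddv : BddAbove {a : ℝ | ∀ᶠ n in atTop, a ≤ v n} := by
    refine ⟨1, fun a ha => ?_⟩
    obtain ⟨n, hn⟩ := ha.exists
    exact hn.trans (hv1 n)
  have hne : (0:ℝ) ∈ {a : ℝ | ∀ᶠ n in atTop, a ≤ u n} :=
    Eventually.of_forall hu0
  refine csSup_le ⟨0, hne⟩ (fun a ha => ?_)
  refine le_of_forall_pos_le_add (fun ε hε => ?_)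
  have hmem : a - ε ∈ {a : ℝ | ∀ᶠ n in atTop, a ≤ v n} := by
    filter_upwards [ha, h, hc ε hε] with n h1 h2 h3
    linarith
  have := le_csSup hbddv hmem
  linarith

lemma limsup_le_limsup_aux (u v c : ℕ → ℝ)
    (hu0 : ∀ n, 0 ≤ u n) (hv1 : ∀ n, v n ≤ 1)
    (hc : ∀ ε > (0:ℝ), ∀ᶠ n in atTop, c n ≤ ε)
    (h : ∀ᶠ n in atTop, u n ≤ v n + c n) :
    limsup u atTop ≤ limsup v atTop := by
  rw [limsup_eq, limsup_eq]
  have hbddu : BddBelow {a : ℝ | ∀ᶠ n in atTop, u n ≤ a} := by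
    refine ⟨0, fun a ha => ?_⟩
    obtain ⟨n, hn⟩ := ha.exists
    exact (hu0 n).trans hn
  refine le_csInf ⟨1, Eventually.of_forall hv1⟩ (fun a ha => ?_)
  refine le_of_forall_pos_le_add (fun ε hε => ?_)
  refine csInf_le hbddu ?_
  filter_upwards [ha, h, hc ε hε] with n h1 h2 h3
  linarith

lemma liminf_succ (u : ℕ → ℝ) :
    liminf (fun n => u (n + 1)) atTop = liminf u atTop := by
  rw [liminf_eq, liminf_eq]
  congr 1
  ext a
  simp only [Set.mem_setOf_eq, eventually_atTop]
  constructor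
  · rintro ⟨N, hN⟩
    exact ⟨N + 1, fun n hn => by
      have := hN (n - 1) (by omega)
      have hn1 : n - 1 + 1 = n := by omega
      rwa [hn1] at this⟩
  · rintro ⟨N, hN⟩
    exact ⟨N, fun n hn => hN (n + 1) (by omega)⟩

lemma limsup_succ (u : ℕ → ℝ) :
    limsup (fun n => u (n + 1)) atTop = limsup u atTop := by
  rw [limsup_eq, limsup_eq]
  congr 1
  ext a
  simp only [Set.mem_setOf_eq, eventually_atTop]
  constructor
  · rintro ⟨N, hN⟩
    exact ⟨N + 1, fun n hn => by
      have := hN (n - 1) (by omega)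
      have hn1 : n - 1 + 1 = n := by omega
      rwa [hn1] at this⟩
  · rintro ⟨N, hN⟩
    exact ⟨N, fun n hn => hN (n + 1) (by omega)⟩

lemma const_div_eventually_le (C : ℝ) :
    ∀ ε > (0:ℝ), ∀ᶠ n : ℕ in atTop, C / (n:ℝ) ≤ ε := by
  intro ε hε
  have := tendsto_const_div_atTop_nhds_zero_nat C
  have h2 : ∀ᶠ n : ℕ in atTop, C / (n:ℝ) < ε :=
    this.eventually (eventually_lt_nhds hε)
  exact h2.mono fun n hn => hn.le

lemma cesaro_nonneg {q : ℕ → ℝ} (hq : ∀ i, 0 ≤ q i) (n : ℕ) : 0 ≤ cesaro q n := by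
  unfold cesaro
  apply div_nonneg _ (Nat.cast_nonneg n)
  exact Finset.sum_nonneg (fun i _ => hq i)

lemma cesaro_le_one {q : ℕ → ℝ} (hq : ∀ i, q i ≤ 1) (n : ℕ) : cesaro q n ≤ 1 := by
  unfold cesaro
  rcases Nat.eq_zero_or_pos n with h | h
  · simp [h]
  · rw [div_le_one (by positivity)]
    calc ∑ j ∈ Finset.range n, q j ≤ ∑ j ∈ Finset.range n, 1 :=
          Finset.sum_le_sum (fun i _ => hq i)
      _ = n := by simp

end Aux
section Aux2

variable {Ap : Type}

lemma ind_nonneg (P : Prop) : 0 ≤ ind P := by unfold ind; split <;> norm_num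

lemma ind_le_one (P : Prop) : ind P ≤ 1 := by unfold ind; split <;> norm_num

lemma shift_ineq_aux (S q0 nn : ℝ) (hn : 1 ≤ nn) (hS0 : 0 ≤ S) (hS1 : S ≤ nn + 1)
    (hq0 : 0 ≤ q0) (hq1 : q0 ≤ 1) :
    (S - q0) / nn ≤ S / (nn + 1) + 2 / nn ∧ S / (nn + 1) ≤ (S - q0) / nn + 2 / nn := by
  have hn0 : (0:ℝ) < nn := by linarith
  have hn1 : (0:ℝ) < nn + 1 := by linarith
  constructor
  · have e1 : S / (nn + 1) + 2 / nn = (S * nn + (nn + 1) * 2) / ((nn + 1) * nn) := by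
      rw [div_add_div _ _ hn1.ne' hn0.ne']
    rw [e1, div_le_div_iff₀ hn0 (by positivity)]
    nlinarith [mul_le_mul_of_nonneg_right hS1 hn0.le, mul_nonneg hq0 hn0.le,
      mul_nonneg (mul_nonneg hq0 hn0.le) hn0.le]
  · rw [← add_div, div_le_div_iff₀ hn1 hn0]
    nlinarith [mul_le_mul_of_nonneg_right hq1 hn0.le]

lemma cesaro_shift_bounds (q : ℕ → ℝ) (h0 : ∀ i, 0 ≤ q i) (h1 : ∀ i, q i ≤ 1)
    (n : ℕ) (hn : 1 ≤ n) :
    cesaro (fun i => q (i + 1)) n ≤ cesaro q (n + 1) + 2 / (n:ℝ) ∧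
    cesaro q (n + 1) ≤ cesaro (fun i => q (i + 1)) n + 2 / (n:ℝ) := by
  have hsum : ∑ j ∈ Finset.range (n + 1), q j
      = (∑ j ∈ Finset.range n, q (j + 1)) + q 0 := Finset.sum_range_succ' q n
  have hS0 : 0 ≤ ∑ j ∈ Finset.range (n + 1), q j :=
    Finset.sum_nonneg (fun i _ => h0 i)
  have hS1 : ∑ j ∈ Finset.range (n + 1), q j ≤ (n:ℝ) + 1 := by
    calc ∑ j ∈ Finset.range (n + 1), q j ≤ ∑ j ∈ Finset.range (n + 1), 1 :=
          Finset.sum_le_sum (fun i _ => h1 i)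
      _ = (n:ℝ) + 1 := by simp
  have hnR : (1:ℝ) ≤ (n:ℝ) := by exact_mod_cast hn
  have key := shift_ineq_aux (∑ j ∈ Finset.range (n + 1), q j) (q 0) (n:ℝ)
    hnR hS0 hS1 (h0 0) (h1 0)
  have e1 : cesaro (fun i => q (i + 1)) n
      = ((∑ j ∈ Finset.range (n + 1), q j) - q 0) / (n:ℝ) := by
    unfold cesaro; rw [hsum, add_sub_cancel_right]
  have e2 : cesaro q (n + 1) = (∑ j ∈ Finset.range (n + 1), q j) / ((n:ℝ) + 1) := by
    unfold cesaro; norm_num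
  rw [e1, e2]
  exact key

lemma lr_shift (e : Ext) (q : ℕ → ℝ) (h0 : ∀ i, 0 ≤ q i) (h1 : ∀ i, q i ≤ 1) :
    lr e (fun i => q (i + 1)) = lr e q := by
  set u := cesaro (fun i => q (i + 1)) with hu
  set v := fun n => cesaro q (n + 1) with hv
  have hq0' : ∀ i, 0 ≤ q (i + 1) := fun i => h0 (i + 1)
  have hq1' : ∀ i, q (i + 1) ≤ 1 := fun i => h1 (i + 1)
  have hu0 : ∀ n, 0 ≤ u n := cesaro_nonneg hq0'
  have hu1 : ∀ n, u n ≤ 1 := cesaro_le_one hq1'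
  have hv0 : ∀ n, 0 ≤ v n := fun n => cesaro_nonneg h0 (n + 1)
  have hv1 : ∀ n, v n ≤ 1 := fun n => cesaro_le_one h1 (n + 1)
  have hev1 : ∀ᶠ n : ℕ in atTop, u n ≤ v n + 2 / (n:ℝ) := by
    rw [eventually_atTop]
    exact ⟨1, fun n hn => (cesaro_shift_bounds q h0 h1 n hn).1⟩
  have hev2 : ∀ᶠ n : ℕ in atTop, v n ≤ u n + 2 / (n:ℝ) := by
    rw [eventually_atTop]
    exact ⟨1, fun n hn => (cesaro_shift_bounds q h0 h1 n hn).2⟩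
  have hvq : liminf v atTop = liminf (cesaro q) atTop := liminf_succ (cesaro q)
  have hvq' : limsup v atTop = limsup (cesaro q) atTop := limsup_succ (cesaro q)
  cases e with
  | inf =>
    show liminf u atTop = liminf (cesaro q) atTop
    rw [← hvq]
    exact le_antisymm
      (liminf_le_liminf_aux u v _ hu0 hv1 (const_div_eventually_le 2) hev1)
      (liminf_le_liminf_aux v u _ hv0 hu1 (const_div_eventually_le 2) hev2)
  | sup =>
    show limsup u atTop = limsup (cesaro q) atTop
    rw [← hvq']
    exact le_antisymm
      (limsup_le_limsup_aux u v _ hu0 hv1 (const_div_eventually_le 2) hev1)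
      (limsup_le_limsup_aux v u _ hv0 hu1 (const_div_eventually_le 2) hev2)

lemma sat_freq_suffix_succ (e : Ext) (c : Cmp) (p : ℚ) (χ : FLTL Ap)
    (w : Word Ap) (t : ℕ) :
    Sat (.freq e c p χ) (suffixW w (t + 1)) ↔ Sat (.freq e c p χ) (suffixW w t) := by
  have hseq : (fun i => ind (Sat χ (suffixW (suffixW w (t + 1)) i)))
      = fun i => ind (Sat χ (suffixW (suffixW w t) (i + 1))) := by
    funext i
    rw [suffixW_suffixW, suffixW_suffixW]
    have h : t + 1 + i = t + (i + 1) := by omega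
    rw [h]
  have hlr : lr e (fun i => ind (Sat χ (suffixW (suffixW w t) (i + 1))))
      = lr e (fun i => ind (Sat χ (suffixW (suffixW w t) i))) :=
    lr_shift e (fun j => ind (Sat χ (suffixW (suffixW w t) j)))
      (fun j => ind_nonneg _) (fun j => ind_le_one _)
  show c.rel (lr e fun i => ind (Sat χ (suffixW (suffixW w (t + 1)) i))) (p:ℝ)
    ↔ c.rel (lr e fun i => ind (Sat χ (suffixW (suffixW w t) i))) (p:ℝ)
  rw [hseq, hlr]

lemma sat_freq_suffix (e : Ext) (c : Cmp) (p : ℚ) (χ : FLTL Ap)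
    (w : Word Ap) (h : Sat (.freq e c p χ) w) (t : ℕ) :
    Sat (.freq e c p χ) (suffixW w t) := by
  induction t with
  | zero => rwa [suffixW_zero]
  | succ t ih => exact (sat_freq_suffix_succ e c p χ w t).2 ih

end Aux2
section Aux3

variable {Ap : Type}

/-- Weight measure for termination of slave runs. -/
def wt : FLTL Ap → ℕ
  | .tt => 0
  | .ff => 0
  | .atom _ => 1
  | .natom _ => 1
  | .conj φ ψ => wt φ + wt ψ
  | .disj φ ψ => wt φ + wt ψ
  | .next φ => wt φ + 1
  | .fut _ => 0
  | .glob _ => 0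
  | .untl _ _ => 0
  | .freq _ _ _ _ => 0

lemma wt_step_le (ψ : FLTL Ap) (ν : Set Ap) : wt (step ψ ν) ≤ wt ψ := by
  induction ψ with
  | conj φ χ ihφ ihχ => show wt (step φ ν) + wt (step χ ν) ≤ _; simp [wt]; omega
  | disj φ χ ihφ ihχ => show wt (step φ ν) + wt (step χ ν) ≤ _; simp [wt]; omega
  | atom a => show wt (if a ∈ ν then FLTL.tt else FLTL.ff) ≤ _; split <;> simp [wt]
  | natom a => show wt (if a ∈ ν then FLTL.ff else FLTL.tt) ≤ _; split <;> simp [wt]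
  | next φ => show wt φ ≤ wt φ + 1; omega
  | _ => exact le_refl _

lemma isSink_of_wt_zero (ψ : FLTL Ap) (h : wt ψ = 0) : isSink ψ := by
  induction ψ with
  | conj φ χ ihφ ihχ =>
    intro ν
    have h1 : wt φ = 0 ∧ wt χ = 0 := by simp [wt] at h; omega
    show FLTL.conj (step φ ν) (step χ ν) = FLTL.conj φ χ
    rw [ihφ h1.1 ν, ihχ h1.2 ν]
  | disj φ χ ihφ ihχ =>
    intro ν
    have h1 : wt φ = 0 ∧ wt χ = 0 := by simp [wt] at h; omega
    show FLTL.disj (step φ ν) (step χ ν) = FLTL.disj φ χ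
    rw [ihφ h1.1 ν, ihχ h1.2 ν]
  | atom a => simp [wt] at h
  | natom a => simp [wt] at h
  | next φ => simp [wt] at h
  | _ => intro ν; rfl

lemma wt_step_lt (ψ : FLTL Ap) (ν : Set Ap) (h : 0 < wt ψ) :
    wt (step ψ ν) < wt ψ := by
  induction ψ with
  | conj φ χ ihφ ihχ =>
    show wt (step φ ν) + wt (step χ ν) < wt φ + wt χ
    have h' : 0 < wt φ ∨ 0 < wt χ := by
      by_contra hc; push_neg at hc
      simp [wt] at h; omega
    rcases h' with h' | h'
    · have := ihφ h'; have := wt_step_le χ ν; omega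
    · have := ihχ h'; have := wt_step_le φ ν; omega
  | disj φ χ ihφ ihχ =>
    show wt (step φ ν) + wt (step χ ν) < wt φ + wt χ
    have h' : 0 < wt φ ∨ 0 < wt χ := by
      by_contra hc; push_neg at hc
      simp [wt] at h; omega
    rcases h' with h' | h'
    · have := ihφ h'; have := wt_step_le χ ν; omega
    · have := ihχ h'; have := wt_step_le φ ν; omega
  | atom a => show wt (if a ∈ ν then FLTL.tt else FLTL.ff) < _; split <;> simp [wt]
  | natom a => show wt (if a ∈ ν then FLTL.ff else FLTL.tt) < _; split <;> simp [wt]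
  | next φ => show wt φ < wt φ + 1; omega
  | _ => simp [wt] at h

lemma wt_pos_of_not_isSink {ψ : FLTL Ap} (h : ¬ isSink ψ) : 0 < wt ψ := by
  by_contra hc
  exact h (isSink_of_wt_zero ψ (by omega))

/-- a segment word as a cons. -/
lemma segWord_succ_cons (w : Word Ap) (t k : ℕ) :
    segWord w t (k + 1) = w t :: segWord w (t + 1) k := by
  unfold segWord
  rw [List.range_succ_eq_map, List.map_cons, List.map_map]
  refine congrArg₂ List.cons (by simp) ?_
  refine List.map_congr_left (fun j hj => ?_)
  show w (t + (j + 1)) = w (t + 1 + j)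
  have h : t + (j + 1) = t + 1 + j := by omega
  rw [h]

/-- a segment word as a snoc. -/
lemma segWord_succ_snoc (w : Word Ap) (t k : ℕ) :
    segWord w t (k + 1) = segWord w t k ++ [w (t + k)] := by
  unfold segWord
  rw [List.range_succ, List.map_append]
  rfl

lemma slaveRunList_nil (ψ : FLTL Ap) : slaveRunList ψ [] = some ψ := rfl

lemma slaveRunList_cons (ψ : FLTL Ap) (ν : Set Ap) (l : List (Set Ap)) :
    slaveRunList ψ (ν :: l) = if isSink ψ then none else slaveRunList (step ψ ν) l := rfl

lemma slaveRunList_append_singleton (l : List (Set Ap)) (ψ : FLTL Ap) (ν : Set Ap) :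
    slaveRunList ψ (l ++ [ν])
      = (slaveRunList ψ l).bind (fun χ => if isSink χ then none else some (step χ ν)) := by
  induction l generalizing ψ with
  | nil =>
    rw [List.nil_append, slaveRunList_cons, slaveRunList_nil]
    by_cases h : isSink ψ <;> simp [h, slaveRunList_nil]
  | cons μ rest ih =>
    rw [List.cons_append, slaveRunList_cons, slaveRunList_cons]
    by_cases h : isSink ψ
    · simp [h]
    · simp only [h, if_false, ih]

lemma tokState_self (ξ : FLTL Ap) (w : Word Ap) (b : ℕ) :
    tokState ξ w b b = some ξ := by
  unfold tokState
  have : b - b = 0 := by omega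
  rw [this]
  show slaveRunList ξ (List.map _ (List.range 0)) = some ξ
  rw [List.range_zero, List.map_nil, slaveRunList_nil]

lemma tokState_succ (ξ : FLTL Ap) (w : Word Ap) {b n : ℕ} (h : b ≤ n) :
    tokState ξ w b (n + 1)
      = (tokState ξ w b n).bind (fun χ => if isSink χ then none else some (step χ (w n))) := by
  unfold tokState
  have h1 : n + 1 - b = (n - b) + 1 := by omega
  have h2 : b + (n - b) = n := by omega
  rw [h1, segWord_succ_snoc, h2, slaveRunList_append_singleton]

lemma tokState_none_succ (ξ : FLTL Ap) (w : Word Ap) {b n : ℕ} (h : b ≤ n)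
    (h0 : tokState ξ w b n = none) : tokState ξ w b (n + 1) = none := by
  rw [tokState_succ ξ w h, h0]; rfl

lemma tokState_sink_succ (ξ : FLTL Ap) (w : Word Ap) {b n : ℕ} (h : b ≤ n)
    {σ : FLTL Ap} (h0 : tokState ξ w b n = some σ) (hs : isSink σ) :
    tokState ξ w b (n + 1) = none := by
  rw [tokState_succ ξ w h, h0]
  simp [hs]

lemma tokState_none_mono (ξ : FLTL Ap) (w : Word Ap) {b n m : ℕ} (hb : b ≤ n)
    (hnm : n ≤ m) (h0 : tokState ξ w b n = none) : tokState ξ w b m = none := by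
  have key : ∀ k, tokState ξ w b (n + k) = none := by
    intro k
    induction k with
    | zero => exact h0
    | succ k ih => exact tokState_none_succ ξ w (n := n + k) (by omega) ih
  have := key (m - n)
  rwa [show n + (m - n) = m by omega] at this

/-- A token dies (reaches a sink) at most once. -/
lemma tokState_sink_unique (ξ : FLTL Ap) (w : Word Ap) {b n n' : ℕ}
    {σ σ' : FLTL Ap} (hb : b ≤ n) (hb' : b ≤ n')
    (h : tokState ξ w b n = some σ) (hs : isSink σ)
    (h' : tokState ξ w b n' = some σ') (hs' : isSink σ') : n = n' := by
  by_contra hne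
  rcases Nat.lt_or_ge n n' with hlt | hge
  · have h1 := tokState_sink_succ ξ w hb h hs
    have h2 := tokState_none_mono ξ w (by omega) (by omega : n + 1 ≤ n') h1
    rw [h'] at h2; cases h2
  · have hlt : n' < n := by omega
    have h1 := tokState_sink_succ ξ w hb' h' hs'
    have h2 := tokState_none_mono ξ w (by omega) (by omega : n' + 1 ≤ n) h1
    rw [h] at h2; cases h2

/-- Characterization of the token sets in terms of token runs. -/
lemma mem_tokenSet_iff (ξ : FLTL Ap) (w : Word Ap) (n : ℕ) (σ : FLTL Ap) :
    σ ∈ tokenSet ξ w n ↔ ∃ b ≤ n, tokState ξ w b n = some σ := by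
  induction n generalizing σ with
  | zero =>
    constructor
    · intro h
      have hσ : σ = ξ := h
      exact ⟨0, le_refl 0, by rw [hσ]; exact tokState_self ξ w 0⟩
    · rintro ⟨b, hb, h⟩
      interval_cases b
      rw [tokState_self] at h
      exact (Option.some.inj h).symm
  | succ n ih =>
    constructor
    · intro h
      rcases Set.mem_insert_iff.1 h with h | h
      · exact ⟨n + 1, le_refl _, by rw [h]; exact tokState_self ξ w (n + 1)⟩
      · obtain ⟨χ, ⟨hχ, hns⟩, hstep⟩ := h
        obtain ⟨b, hb, hrun⟩ := (ih χ).1 hχ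
        refine ⟨b, by omega, ?_⟩
        rw [tokState_succ ξ w hb, hrun]
        rw [Option.bind_some]
        rw [if_neg hns]
        rw [← hstep]
    · rintro ⟨b, hb, h⟩
      rcases Nat.lt_or_ge b (n + 1) with hlt | hge
      · have hb' : b ≤ n := by omega
        rw [tokState_succ ξ w hb'] at h
        rcases h0 : tokState ξ w b n with _ | χ
        · rw [h0] at h; simp at h
        · rw [h0] at h
          by_cases hs : isSink χ
          · simp [hs] at h
          · rw [Option.bind_some, if_neg hs] at h
            right
            exact ⟨χ, ⟨(ih χ).2 ⟨b, hb', h0⟩, hs⟩, Option.some.inj h⟩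
      · have hbn : b = n + 1 := by omega
        rw [hbn, tokState_self] at h
        exact Set.mem_insert_iff.2 (Or.inl (Option.some.inj h).symm)

/-- Every token eventually reaches a sink. -/
lemma slaveRun_reaches_sink (w : Word Ap) (ψ : FLTL Ap) (t : ℕ) :
    ∃ k σ, slaveRunList ψ (segWord w t k) = some σ ∧ isSink σ := by
  by_cases hs : isSink ψ
  · exact ⟨0, ψ, by simp [segWord, slaveRunList], hs⟩
  · have hwt : wt (step ψ (w t)) < wt ψ := wt_step_lt ψ (w t) (wt_pos_of_not_isSink hs)
    have ih := slaveRun_reaches_sink w (step ψ (w t)) (t + 1)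
    obtain ⟨k, σ, hrun, hσ⟩ := ih
    refine ⟨k + 1, σ, ?_, hσ⟩
    rw [segWord_succ_cons]
    show (if isSink ψ then none else slaveRunList (step ψ (w t)) (segWord w (t + 1) k)) = some σ
    simp [hs, hrun]
termination_by wt ψ

lemma token_reaches_sink (ξ : FLTL Ap) (w : Word Ap) (b : ℕ) :
    ∃ n, b ≤ n ∧ ∃ σ, tokState ξ w b n = some σ ∧ isSink σ := by
  obtain ⟨k, σ, hrun, hσ⟩ := slaveRun_reaches_sink w ξ b
  refine ⟨b + k, by omega, σ, ?_, hσ⟩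
  unfold tokState
  have : b + k - b = k := by omega
  rw [this]
  exact hrun

end Aux3
section Aux4

variable {Ap : Type}

/-- The assignment used to transfer provability at sinks into semantic truth. -/
def Ass (R : Set (FLTL Ap)) (w : Word Ap) (N t : ℕ) (χ : FLTL Ap) : Prop :=
  sizeOf χ ≤ N →
    (Sat χ (suffixW w t) ∧ (∀ ζ, χ = FLTL.glob ζ → χ ∈ R) ∧
      ∀ ζ₁ ζ₂, χ ≠ FLTL.untl ζ₁ ζ₂)

/-- All non-Boolean leaves have size at most `N`. -/
def LeafSmall (N : ℕ) : FLTL Ap → Prop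
  | .conj φ ψ => LeafSmall N φ ∧ LeafSmall N ψ
  | .disj φ ψ => LeafSmall N φ ∧ LeafSmall N ψ
  | χ => sizeOf χ ≤ N

lemma leafSmall_of_sizeOf {N : ℕ} : ∀ χ : FLTL Ap, sizeOf χ ≤ N → LeafSmall N χ := by
  intro χ
  induction χ with
  | conj φ ψ ihφ ihψ =>
    intro h
    simp only [FLTL.conj.sizeOf_spec] at h
    exact ⟨ihφ (by omega), ihψ (by omega)⟩
  | disj φ ψ ihφ ihψ =>
    intro h
    simp only [FLTL.disj.sizeOf_spec] at h
    exact ⟨ihφ (by omega), ihψ (by omega)⟩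
  | _ => intro h; exact h

lemma one_le_sizeOf (χ : FLTL Ap) : 1 ≤ sizeOf χ := by
  cases χ <;> simp +arith

lemma leafSmall_step {N : ℕ} (ν : Set Ap) :
    ∀ χ : FLTL Ap, LeafSmall N χ → LeafSmall N (step χ ν) := by
  intro χ
  induction χ with
  | conj φ ψ ihφ ihψ => exact fun h => ⟨ihφ h.1, ihψ h.2⟩
  | disj φ ψ ihφ ihψ => exact fun h => ⟨ihφ h.1, ihψ h.2⟩
  | atom a =>
    intro h
    have h1 : 1 ≤ N := le_trans (one_le_sizeOf _) h
    show LeafSmall N (if a ∈ ν then FLTL.tt else FLTL.ff)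
    split <;> simpa [LeafSmall]
  | natom a =>
    intro h
    have h1 : 1 ≤ N := le_trans (one_le_sizeOf _) h
    show LeafSmall N (if a ∈ ν then FLTL.ff else FLTL.tt)
    split <;> simpa [LeafSmall]
  | next φ _ =>
    intro h
    have h2 : sizeOf (FLTL.next φ) ≤ N := h
    have h' : sizeOf φ ≤ N := by
      have h3 : sizeOf (FLTL.next φ) = 1 + sizeOf φ := FLTL.next.sizeOf_spec φ
      omega
    exact leafSmall_of_sizeOf φ h'
  | _ => exact fun h => h

lemma evalA_sat {R : Set (FLTL Ap)} {w : Word Ap} {N t : ℕ} :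
    ∀ χ : FLTL Ap, LeafSmall N χ → evalA (Ass R w N t) χ → Sat χ (suffixW w t) := by
  intro χ
  induction χ with
  | tt => intro _ _; trivial
  | ff => intro _ h; exact h.elim
  | conj φ ψ ihφ ihψ => exact fun hl h => ⟨ihφ hl.1 h.1, ihψ hl.2 h.2⟩
  | disj φ ψ ihφ ihψ =>
    rintro hl (h | h)
    · exact Or.inl (ihφ hl.1 h)
    · exact Or.inr (ihψ hl.2 h)
  | atom a => exact fun hl h => (h hl).1
  | natom a => exact fun hl h => (h hl).1
  | next φ _ => exact fun hl h => (h hl).1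
  | fut φ _ => exact fun hl h => (h hl).1
  | glob φ _ => exact fun hl h => (h hl).1
  | untl φ ψ _ _ => exact fun hl h => (h hl).1
  | freq e c p φ _ => exact fun hl h => (h hl).1

lemma evalA_step_back {R : Set (FLTL Ap)} {w : Word Ap} {N t : ℕ}
    (Hglob : ∀ ζ : FLTL Ap, FLTL.glob ζ ∈ R → sizeOf (FLTL.glob ζ) ≤ N →
      Sat (FLTL.glob ζ) (suffixW w t)) :
    ∀ χ : FLTL Ap,
      evalA (Ass R w N (t + 1)) (step χ (w t)) → evalA (Ass R w N t) χ := by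
  intro χ
  induction χ with
  | tt => intro _; trivial
  | ff => intro h; exact h
  | conj φ ψ ihφ ihψ => exact fun h => ⟨ihφ h.1, ihψ h.2⟩
  | disj φ ψ ihφ ihψ =>
    rintro (h | h)
    · exact Or.inl (ihφ h)
    · exact Or.inr (ihψ h)
  | atom a =>
    intro h hsz
    refine ⟨?_, (by intro ζ hζ; cases hζ), (by intro ζ₁ ζ₂ hζ; cases hζ)⟩
    by_cases ha : a ∈ w t
    · show a ∈ w (t + 0)
      simpa using ha
    · exfalso
      have hstep : step (FLTL.atom a) (w t) = FLTL.ff := by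
        show (if a ∈ w t then FLTL.tt else FLTL.ff) = FLTL.ff
        rw [if_neg ha]
      rw [hstep] at h
      exact h
  | natom a =>
    intro h hsz
    refine ⟨?_, (by intro ζ hζ; cases hζ), (by intro ζ₁ ζ₂ hζ; cases hζ)⟩
    by_cases ha : a ∈ w t
    · exfalso
      have hstep : step (FLTL.natom a) (w t) = FLTL.ff := by
        show (if a ∈ w t then FLTL.ff else FLTL.tt) = FLTL.ff
        rw [if_pos ha]
      rw [hstep] at h
      exact h
    · show a ∉ w (t + 0)
      simpa using ha
  | next φ _ =>
    intro h hsz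
    have hφsz : sizeOf φ ≤ N := by
      have : sizeOf (FLTL.next φ) = 1 + sizeOf φ := FLTL.next.sizeOf_spec φ
      omega
    have hsat : Sat φ (suffixW w (t + 1)) :=
      evalA_sat φ (leafSmall_of_sizeOf φ hφsz) h
    refine ⟨?_, (by intro ζ hζ; cases hζ), (by intro ζ₁ ζ₂ hζ; cases hζ)⟩
    show Sat φ (suffixW (suffixW w t) 1)
    rwa [suffixW_suffixW]
  | fut φ _ =>
    intro h hsz
    obtain ⟨hsat, -, -⟩ := h hsz
    refine ⟨?_, (by intro ζ hζ; cases hζ), (by intro ζ₁ ζ₂ hζ; cases hζ)⟩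
    obtain ⟨k, hk⟩ := hsat
    refine ⟨k + 1, ?_⟩
    rw [suffixW_suffixW] at hk ⊢
    rwa [show t + (k + 1) = t + 1 + k by omega]
  | glob φ _ =>
    intro h hsz
    obtain ⟨hsat, hmem, -⟩ := h hsz
    have hRm : FLTL.glob φ ∈ R := hmem φ rfl
    exact ⟨Hglob φ hRm hsz, fun ζ _ => hRm, by intro ζ₁ ζ₂ hζ; cases hζ⟩
  | untl φ ψ _ _ =>
    intro h hsz
    obtain ⟨-, -, hu⟩ := h hsz
    exact absurd rfl (hu φ ψ)
  | freq e c p φ _ =>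
    intro h hsz
    obtain ⟨hsat, -, -⟩ := h hsz
    exact ⟨(sat_freq_suffix_succ e c p φ w t).1 hsat,
      (by intro ζ hζ; cases hζ), (by intro ζ₁ ζ₂ hζ; cases hζ)⟩

lemma run_back {R : Set (FLTL Ap)} {w : Word Ap} {N T : ℕ}
    (hT : ∀ t', T ≤ t' → ∀ ζ : FLTL Ap, FLTL.glob ζ ∈ R →
      sizeOf (FLTL.glob ζ) ≤ N → Sat (FLTL.glob ζ) (suffixW w t')) :
    ∀ (k t : ℕ) (ψ σ : FLTL Ap), T ≤ t →
      slaveRunList ψ (segWord w t k) = some σ →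
      evalA (Ass R w N (t + k)) σ → evalA (Ass R w N t) ψ := by
  intro k
  induction k with
  | zero =>
    intro t ψ σ ht hrun h
    unfold segWord at hrun
    rw [List.range_zero, List.map_nil, slaveRunList_nil] at hrun
    rw [Nat.add_zero] at h
    rwa [← Option.some.inj hrun] at h
  | succ k ih =>
    intro t ψ σ ht hrun h
    rw [segWord_succ_cons, slaveRunList_cons] at hrun
    by_cases hs : isSink ψ
    · rw [if_pos hs] at hrun; cases hrun
    · rw [if_neg hs] at hrun
      have h' : evalA (Ass R w N ((t + 1) + k)) σ := by
        rwa [show (t + 1) + k = t + (k + 1) by omega] 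
      have hrec := ih (t + 1) (step ψ (w t)) σ (by omega) hrun h'
      exact evalA_step_back (fun ζ hζ hsz => hT t ht ζ hζ hsz) ψ hrec

/-- The central soundness lemma for a single token: if it reaches an
`R`-provable sink past the threshold, the slave formula holds at its birth date. -/
lemma token_sound {R : Set (FLTL Ap)} {w : Word Ap} {ξ : FLTL Ap} {T : ℕ}
    (hshape : ∀ χ ∈ R, isRecShape χ)
    (hT : ∀ t', T ≤ t' → ∀ χ ∈ R, sizeOf χ ≤ sizeOf ξ → Sat χ (suffixW w t'))
    {b n : ℕ} (hTb : T ≤ b) (hbn : b ≤ n) {σ : FLTL Ap}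
    (hrun : tokState ξ w b n = some σ) (hprov : pproves R σ) :
    Sat ξ (suffixW w b) := by
  set N := sizeOf ξ with hN
  have hAssum : ∀ χ ∈ R, evalA (Ass R w N n) χ := by
    intro χ hχ
    have hsh := hshape χ hχ
    have hmain : Ass R w N n χ := by
      intro hsz
      refine ⟨hT n (by omega) χ hχ hsz, fun ζ _ => hχ, ?_⟩
      intro ζ₁ ζ₂ heq
      rw [heq] at hsh
      exact hsh
    cases χ with
    | fut _ => exact hmain
    | glob _ => exact hmain
    | freq _ _ _ _ => exact hmain
    | tt => exact hsh.elim
    | ff => exact hsh.elim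
    | atom _ => exact hsh.elim
    | natom _ => exact hsh.elim
    | conj _ _ => exact hsh.elim
    | disj _ _ => exact hsh.elim
    | next _ => exact hsh.elim
    | untl _ _ => exact hsh.elim
  have hσ : evalA (Ass R w N n) σ := hprov _ hAssum
  have hσ' : evalA (Ass R w N (b + (n - b))) σ := by
    rwa [show b + (n - b) = n by omega]
  have hξ : evalA (Ass R w N b) ξ :=
    run_back (fun t' ht' ζ hζ hsz => hT t' ht' _ hζ hsz) (n - b) b ξ σ hTb hrun hσ'
  exact evalA_sat ξ (leafSmall_of_sizeOf ξ (le_refl N)) hξ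

lemma subf_finite : ∀ χ : FLTL Ap, (subf χ).Finite := by
  intro χ
  induction χ with
  | conj φ ψ ihφ ihψ => exact (ihφ.union ihψ).insert _
  | disj φ ψ ihφ ihψ => exact (ihφ.union ihψ).insert _
  | next φ ih => exact ih.insert _
  | fut φ ih => exact ih.insert _
  | glob φ ih => exact ih.insert _
  | untl φ ψ ihφ ihψ => exact (ihφ.union ihψ).insert _
  | freq e c p φ ih => exact ih.insert _
  | _ => exact Set.finite_singleton _

lemma RecSet_finite (φ : FLTL Ap) : (RecSet φ).Finite :=
  (subf_finite φ).subset (fun ψ hψ => hψ.1)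

lemma rsatCond_eventually {w : Word Ap} {χ : FLTL Ap} (h : RsatCond w χ) :
    ∀ᶠ t in atTop, Sat χ (suffixW w t) := by
  cases χ with
  | fut ζ => exact Eventually.of_forall (fun t => h t)
  | glob ζ =>
    obtain ⟨k, hk⟩ := h
    rw [eventually_atTop]
    refine ⟨k, fun t htk => ?_⟩
    intro m
    have hx := hk ((t - k) + m)
    rw [suffixW_suffixW] at hx ⊢
    rwa [show t + m = k + ((t - k) + m) by omega]
  | freq e c p ζ => exact Eventually.of_forall (sat_freq_suffix e c p ζ w h)
  | tt => exact h.elim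
  | ff => exact h.elim
  | atom _ => exact h.elim
  | natom _ => exact h.elim
  | conj _ _ => exact h.elim
  | disj _ _ => exact h.elim
  | next _ => exact h.elim
  | untl _ _ => exact h.elim

lemma supply {φ : FLTL Ap} {R : Set (FLTL Ap)} (hR : R ⊆ RecSet φ)
    {w : Word Ap} {N : ℕ}
    (Hsmall : ∀ χ ∈ R, sizeOf χ ≤ N → RsatCond w χ) :
    ∃ T, ∀ t, T ≤ t → ∀ χ ∈ R, sizeOf χ ≤ N → Sat χ (suffixW w t) := by
  have hfin : {χ : FLTL Ap | χ ∈ R ∧ sizeOf χ ≤ N}.Finite :=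
    (((RecSet_finite φ).subset hR).subset (fun χ hχ => hχ.1))
  have hev : ∀ᶠ t in atTop, ∀ χ ∈ {χ : FLTL Ap | χ ∈ R ∧ sizeOf χ ≤ N},
      Sat χ (suffixW w t) := by
    rw [Set.Finite.eventually_all hfin]
    intro χ hχ
    exact rsatCond_eventually (Hsmall χ hχ.1 hχ.2)
  rw [eventually_atTop] at hev
  obtain ⟨T, hT⟩ := hev
  exact ⟨T, fun t ht χ hχ hsz => hT t ht χ ⟨hχ, hsz⟩⟩

end Aux4
section Aux5

variable {Ap : Type}

lemma buchi_birthdates {R : Set (FLTL Ap)} {ξ : FLTL Ap} {w : Word Ap}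
    (hacc : buchiAcc R ξ w) (K : ℕ) :
    ∃ b, K ≤ b ∧ ∃ n, b ≤ n ∧ ∃ σ, tokState ξ w b n = some σ ∧ isSink σ ∧
      pproves R σ := by
  by_contra hcon
  have hb : ∀ b n σ, b ≤ n → tokState ξ w b n = some σ → isSink σ →
      pproves R σ → b < K := by
    intro b n σ hbn hts hs hp
    by_contra hK
    exact hcon ⟨b, by omega, n, hbn, σ, hts, hs, hp⟩
  set g : ℕ → ℕ := fun b =>
    if h : ∃ n, b ≤ n ∧ ∃ σ, tokState ξ w b n = some σ ∧ isSink σ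
    then h.choose else 0 with hg
  set Nmax := (Finset.range K).sup g with hNmax
  obtain ⟨n, hex1, hn⟩ := (hacc.and_eventually (eventually_gt_atTop Nmax)).exists
  obtain ⟨σ, hσmem, hσs, hσp⟩ := hex1
  obtain ⟨b, hbn, hts⟩ := (mem_tokenSet_iff ξ w n σ).1 hσmem
  have hbK : b < K := hb b n σ hbn hts hσs hσp
  have hex : ∃ n', b ≤ n' ∧ ∃ σ', tokState ξ w b n' = some σ' ∧ isSink σ' :=
    ⟨n, hbn, σ, hts, hσs⟩
  have hgb : g b = hex.choose := by rw [hg]; exact dif_pos hex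
  obtain ⟨hc1, σ', hc2, hc3⟩ := hex.choose_spec
  have heq : hex.choose = n := tokState_sink_unique ξ w hc1 hbn hc2 hc3 hts hσs
  have hle : g b ≤ Nmax := Finset.le_sup (Finset.mem_range.2 hbK)
  omega

lemma buchi_sound {φ : FLTL Ap} {R : Set (FLTL Ap)} (hR : R ⊆ RecSet φ)
    {w : Word Ap} {ξ : FLTL Ap} {T : ℕ}
    (hT : ∀ t, T ≤ t → ∀ χ ∈ R, sizeOf χ ≤ sizeOf ξ → Sat χ (suffixW w t))
    (hacc : buchiAcc R ξ w) : Sat (.glob (.fut ξ)) w := by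
  intro k
  obtain ⟨b, hbK, n, hbn, σ, hts, hs, hp⟩ := buchi_birthdates hacc (max k T)
  have hsat : Sat ξ (suffixW w b) :=
    token_sound (fun χ hχ => (hR hχ).2) (fun t' ht' => hT t' ht')
      (le_trans (le_max_right k T) hbK) hbn hts hp
  refine ⟨b - k, ?_⟩
  rw [suffixW_suffixW]
  have hkb : k ≤ b := le_trans (le_max_left k T) hbK
  rwa [show k + (b - k) = b by omega]

lemma cobuchi_sound {φ : FLTL Ap} {R : Set (FLTL Ap)} (hR : R ⊆ RecSet φ)
    {w : Word Ap} {ξ : FLTL Ap} {T : ℕ}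
    (hT : ∀ t, T ≤ t → ∀ χ ∈ R, sizeOf χ ≤ sizeOf ξ → Sat χ (suffixW w t))
    (hacc : coBuchiAcc R ξ w) : Sat (.fut (.glob ξ)) w := by
  rw [coBuchiAcc, eventually_atTop] at hacc
  obtain ⟨M, hM⟩ := hacc
  refine ⟨max T M, ?_⟩
  intro m
  rw [suffixW_suffixW]
  set b := max T M + m with hb
  obtain ⟨n, hbn, σ, hts, hsink⟩ := token_reaches_sink ξ w b
  have hprov : pproves R σ := by
    by_contra hnp
    exact hM n (by omega) ⟨σ, (mem_tokenSet_iff ξ w n σ).2 ⟨b, hbn, hts⟩, hsink, hnp⟩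
  exact token_sound (fun χ hχ => (hR hχ).2) (fun t' ht' => hT t' ht')
    (by omega) hbn hts hprov

end Aux5
section Aux6

variable {Ap : Type}

/-- The per-step reward of the mean-payoff slave equals the number of tokens
currently sitting in accepting sinks. -/
lemma mpReward_eq_card (R : Set (FLTL Ap)) (ξ : FLTL Ap) (w : Word Ap) (n : ℕ) :
    mpRewardFn R (tokenCount ξ w n) =
      (((Finset.range (n + 1)).filter (fun b => ∃ σ, tokState ξ w b n = some σ ∧
        isSink σ ∧ pproves R σ)).card : ℝ) := by
  classical
  set t0 : Finset (FLTL Ap) :=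
    (Finset.range (n + 1)).image (fun b => (tokState ξ w b n).getD FLTL.tt) with ht0
  set s : Finset {χ : FLTL Ap // isSink χ ∧ pproves R χ} :=
    t0.subtype (fun χ => isSink χ ∧ pproves R χ) with hs
  have hzero : ∀ x : {χ : FLTL Ap // isSink χ ∧ pproves R χ}, x ∉ s →
      ((tokenCount ξ w n x.1 : ℝ)) = 0 := by
    intro x hx
    rcases Nat.eq_zero_or_pos (tokenCount ξ w n x.1) with h | h
    · rw [h]; norm_num
    · exfalso
      apply hx
      obtain ⟨b, hb⟩ := Finset.card_pos.1 h
      rw [Finset.mem_filter] at hb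
      refine Finset.mem_subtype.2 ?_
      rw [ht0]
      exact Finset.mem_image.2 ⟨b, hb.1, by rw [hb.2]; rfl⟩
  have h1 : mpRewardFn R (tokenCount ξ w n)
      = ∑ x ∈ s, ((tokenCount ξ w n x.1 : ℕ) : ℝ) := tsum_eq_sum hzero
  have h2 : ∑ x ∈ s, ((tokenCount ξ w n x.1 : ℕ) : ℝ)
      = ∑ χ ∈ t0.filter (fun χ => isSink χ ∧ pproves R χ),
          ((tokenCount ξ w n χ : ℕ) : ℝ) := by
    rw [hs]
    exact Finset.sum_subtype_eq_sum_filter (fun χ => ((tokenCount ξ w n χ : ℕ) : ℝ))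
  set Bn := (Finset.range (n + 1)).filter (fun b => ∃ σ, tokState ξ w b n = some σ ∧
      isSink σ ∧ pproves R σ) with hBn
  have h3 : Bn.card = ∑ χ ∈ t0.filter (fun χ => isSink χ ∧ pproves R χ),
      (Bn.filter (fun b => (tokState ξ w b n).getD FLTL.tt = χ)).card := by
    apply Finset.card_eq_sum_card_fiberwise
    intro b hb
    rw [hBn, Finset.mem_coe, Finset.mem_filter] at hb
    obtain ⟨hbr, σ, hts, hsink, hprov⟩ := hb
    rw [Finset.mem_coe, Finset.mem_filter]
    refine ⟨?_, ?_, ?_⟩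
    · rw [ht0]; exact Finset.mem_image.2 ⟨b, hbr, rfl⟩
    · beta_reduce; rw [hts]; exact hsink
    · beta_reduce; rw [hts]; exact hprov
  have h4 : ∀ χ ∈ t0.filter (fun χ => isSink χ ∧ pproves R χ),
      (Bn.filter (fun b => (tokState ξ w b n).getD FLTL.tt = χ)).card
        = tokenCount ξ w n χ := by
    intro χ hχ
    rw [Finset.mem_filter] at hχ
    unfold tokenCount
    congr 1
    apply Finset.ext
    intro b
    simp only [hBn, Finset.mem_filter]
    constructor
    · rintro ⟨⟨hbr, σ, hts, hsink, hprov⟩, hgd⟩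
      refine ⟨hbr, ?_⟩
      rw [hts] at hgd
      rw [hts]
      simp only [Option.getD_some] at hgd
      rw [hgd]
    · rintro ⟨hbr, hts⟩
      refine ⟨⟨hbr, χ, hts, hχ.2.1, hχ.2.2⟩, ?_⟩
      simp [hts]
  rw [h1, h2, h3]
  push_cast
  refine Finset.sum_congr rfl (fun χ hχ => ?_)
  exact_mod_cast congrArg (Nat.cast (R := ℝ)) (h4 χ hχ).symm

/-- The counting inequality: total reward up to `n` is at most `T` plus the
number of positions `< n` where `ξ` holds. -/
lemma reward_partial_sum_le {φ₀ : FLTL Ap} {R : Set (FLTL Ap)} (hR : R ⊆ RecSet φ₀)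
    {w : Word Ap} {ξ : FLTL Ap} {T : ℕ}
    (hT : ∀ t, T ≤ t → ∀ χ ∈ R, sizeOf χ ≤ sizeOf ξ → Sat χ (suffixW w t)) (n : ℕ) :
    ∑ m ∈ Finset.range n, ((Finset.range (m + 1)).filter
        (fun b => ∃ σ, tokState ξ w b m = some σ ∧ isSink σ ∧ pproves R σ)).card
      ≤ T + ((Finset.range n).filter (fun b => Sat ξ (suffixW w b))).card := by
  classical
  set P : Finset (ℕ × ℕ) := (Finset.range n ×ˢ Finset.range n).filter
    (fun x => x.2 ≤ x.1 ∧ ∃ σ, tokState ξ w x.2 x.1 = some σ ∧ isSink σ ∧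
      pproves R σ) with hP
  have step1 : ∑ m ∈ Finset.range n, ((Finset.range (m + 1)).filter
      (fun b => ∃ σ, tokState ξ w b m = some σ ∧ isSink σ ∧ pproves R σ)).card
      = P.card := by
    have hfib : P.card = ∑ m ∈ Finset.range n,
        (P.filter (fun x => x.1 = m)).card := by
      apply Finset.card_eq_sum_card_fiberwise
      intro x hx
      rw [hP, Finset.mem_coe, Finset.mem_filter, Finset.mem_product] at hx
      exact hx.1.1
    rw [hfib]
    refine Finset.sum_congr rfl (fun m hm => ?_)
    rw [Finset.mem_range] at hm
    apply Finset.card_bij' (i := fun b _ => ((m, b) : ℕ × ℕ)) (j := fun x _ => x.2)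
    · intro b hb
      rw [Finset.mem_filter, Finset.mem_range] at hb
      rw [Finset.mem_filter, hP, Finset.mem_filter, Finset.mem_product]
      exact ⟨⟨⟨Finset.mem_range.2 hm, Finset.mem_range.2 (by omega)⟩,
        by omega, hb.2⟩, rfl⟩
    · intro x hx
      rw [Finset.mem_filter, hP, Finset.mem_filter, Finset.mem_product] at hx
      obtain ⟨⟨⟨hx1, hx2⟩, hle, hacc⟩, hfst⟩ := hx
      rw [Finset.mem_filter, Finset.mem_range]
      rw [hfst] at hle hacc
      exact ⟨by omega, hacc⟩
    · intro b hb; rfl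
    · intro x hx
      rw [Finset.mem_filter] at hx
      exact Prod.ext hx.2.symm rfl
  have injOn : ∀ x ∈ P, ∀ y ∈ P, x.2 = y.2 → x = y := by
    intro x hx y hy hxy
    rw [hP, Finset.mem_filter] at hx hy
    obtain ⟨-, hxle, σx, hxts, hxs, -⟩ := hx
    obtain ⟨-, hyle, σy, hyts, hys, -⟩ := hy
    rw [← hxy] at hyle hyts
    have := tokState_sink_unique ξ w hxle hyle hxts hxs hyts hys
    exact Prod.ext this hxy
  have step2 : P.card = (P.image Prod.snd).card :=
    (Finset.card_image_of_injOn injOn).symm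
  have step3 : P.image Prod.snd ⊆ Finset.range T ∪
      (Finset.range n).filter (fun b => Sat ξ (suffixW w b)) := by
    intro b hb
    obtain ⟨x, hx, hxb⟩ := Finset.mem_image.1 hb
    rw [hP, Finset.mem_filter, Finset.mem_product] at hx
    obtain ⟨⟨hx1, hx2⟩, hle, σ, hts, hsink, hprov⟩ := hx
    rcases Nat.lt_or_ge x.2 T with hbT | hbT
    · exact Finset.mem_union_left _ (Finset.mem_range.2 (by omega))
    · have hsat : Sat ξ (suffixW w x.2) :=
        token_sound (fun χ hχ => (hR hχ).2) (fun t' ht' => hT t' ht')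
          hbT hle hts hprov
      refine Finset.mem_union_right _ (Finset.mem_filter.2 ⟨?_, ?_⟩)
      · rw [← hxb]; exact hx2
      · rw [← hxb]; exact hsat
  calc ∑ m ∈ Finset.range n, ((Finset.range (m + 1)).filter
        (fun b => ∃ σ, tokState ξ w b m = some σ ∧ isSink σ ∧ pproves R σ)).card
      = (P.image Prod.snd).card := by rw [step1, step2]
    _ ≤ (Finset.range T ∪ (Finset.range n).filter (fun b => Sat ξ (suffixW w b))).card :=
        Finset.card_le_card step3
    _ ≤ T + ((Finset.range n).filter (fun b => Sat ξ (suffixW w b))).card := by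
        have := Finset.card_union_le (Finset.range T)
          ((Finset.range n).filter (fun b => Sat ξ (suffixW w b)))
        simpa using this

end Aux6
section Aux7

variable {Ap : Type}

lemma mp_sound {φ₀ : FLTL Ap} {R : Set (FLTL Ap)} (hR : R ⊆ RecSet φ₀)
    {w : Word Ap} {ξ : FLTL Ap} {T : ℕ}
    (hT : ∀ t, T ≤ t → ∀ χ ∈ R, sizeOf χ ≤ sizeOf ξ → Sat χ (suffixW w t))
    {e : Ext} {c : Cmp} {p : ℚ} (hacc : mpAcc R ξ w e c p) :
    Sat (.freq e c p ξ) w := by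
  classical
  set q : ℕ → ℝ := fun i => ind (Sat ξ (suffixW w i)) with hq
  set r : ℕ → ℝ := fun n => mpRewardFn R (tokenCount ξ w n) with hr
  have hr0 : ∀ n, 0 ≤ r n := fun n => tsum_nonneg (fun x => Nat.cast_nonneg _)
  have hq0 : ∀ i, 0 ≤ q i := fun i => ind_nonneg _
  have hq1 : ∀ i, q i ≤ 1 := fun i => ind_le_one _
  have hsum : ∀ n, (∑ m ∈ Finset.range n, r m)
      ≤ (T:ℝ) + ∑ m ∈ Finset.range n, q m := by
    intro n
    have hnat := reward_partial_sum_le hR hT (w := w) n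
    have hq' : ∑ m ∈ Finset.range n, q m
        = (((Finset.range n).filter (fun b => Sat ξ (suffixW w b))).card : ℝ) := by
      rw [hq, Finset.card_filter]
      push_cast
      refine Finset.sum_congr rfl (fun m _ => ?_)
      by_cases hSat : Sat ξ (suffixW w m) <;> simp [ind, hSat]
    have hr' : ∑ m ∈ Finset.range n, r m
        = ((∑ m ∈ Finset.range n, ((Finset.range (m + 1)).filter
            (fun b => ∃ σ, tokState ξ w b m = some σ ∧ isSink σ ∧
              pproves R σ)).card : ℕ) : ℝ) := by
      push_cast
      exact Finset.sum_congr rfl (fun m _ => mpReward_eq_card R ξ w m)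
    rw [hq', hr']
    exact_mod_cast hnat
  have hev : ∀ᶠ n : ℕ in atTop, cesaro r n ≤ cesaro q n + (T:ℝ) / (n:ℝ) := by
    rw [eventually_atTop]
    refine ⟨1, fun n hn => ?_⟩
    have heq : cesaro q n + (T:ℝ) / (n:ℝ)
        = ((∑ m ∈ Finset.range n, q m) + (T:ℝ)) / (n:ℝ) := by
      unfold cesaro; rw [← add_div]
    rw [heq]
    unfold cesaro
    gcongr
    linarith [hsum n]
  have hcomp : lr e r ≤ lr e q := by
    cases e with
    | inf =>
      exact liminf_le_liminf_aux (cesaro r) (cesaro q) (fun n => (T:ℝ) / (n:ℝ))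
        (cesaro_nonneg hr0) (cesaro_le_one hq1) (const_div_eventually_le T) hev
    | sup =>
      exact limsup_le_limsup_aux (cesaro r) (cesaro q) (fun n => (T:ℝ) / (n:ℝ))
        (cesaro_nonneg hr0) (cesaro_le_one hq1) (const_div_eventually_le T) hev
  show c.rel (lr e q) (p:ℝ)
  cases c with
  | ge => exact le_trans hacc hcomp
  | gt => exact lt_of_lt_of_le hacc hcomp

end Aux7
/-- Lemma 5 (soundness of the slave product): assumptions proved by the
product are indeed satisfied on the word. -/
theorem slave_product_sound {Ap : Type} [Fintype Ap] (φ : FLTL Ap) (hφ : InFrag φ)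
    (w : Word Ap) (R : Set (FLTL Ap)) (hR : R ⊆ RecSet φ)
    (hacc : productAccept R w) :
    R ⊆ Rsat φ w ∧ ∀ ψ ∈ R, RsatCond w ψ := by
  have key : ∀ s : ℕ, ∀ ψ ∈ R, sizeOf ψ ≤ s → RsatCond w ψ := by
    intro s
    induction s using Nat.strong_induction_on with
    | _ s ih =>
      intro ψ hψ hsz
      have hshape : isRecShape ψ := (hR hψ).2
      cases ψ with
      | fut ξ =>
        have hsize : sizeOf ξ < sizeOf (FLTL.fut ξ) := by
          rw [FLTL.fut.sizeOf_spec]; omega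
        have Hsmall : ∀ χ ∈ R, sizeOf χ ≤ sizeOf ξ → RsatCond w χ :=
          fun χ hχ hχsz => ih (sizeOf χ) (by omega) χ hχ (le_refl _)
        obtain ⟨T, hT⟩ := supply hR Hsmall
        exact buchi_sound hR hT (hacc _ hψ)
      | glob ξ =>
        have hsize : sizeOf ξ < sizeOf (FLTL.glob ξ) := by
          rw [FLTL.glob.sizeOf_spec]; omega
        have Hsmall : ∀ χ ∈ R, sizeOf χ ≤ sizeOf ξ → RsatCond w χ :=
          fun χ hχ hχsz => ih (sizeOf χ) (by omega) χ hχ (le_refl _)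
        obtain ⟨T, hT⟩ := supply hR Hsmall
        exact cobuchi_sound hR hT (hacc _ hψ)
      | freq e c p ξ =>
        have hsize : sizeOf ξ < sizeOf (FLTL.freq e c p ξ) := by
          rw [FLTL.freq.sizeOf_spec]; omega
        have Hsmall : ∀ χ ∈ R, sizeOf χ ≤ sizeOf ξ → RsatCond w χ :=
          fun χ hχ hχsz => ih (sizeOf χ) (by omega) χ hχ (le_refl _)
        obtain ⟨T, hT⟩ := supply hR Hsmall
        exact mp_sound hR hT (hacc _ hψ)
      | tt => exact hshape.elim
      | ff => exact hshape.elim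
      | atom _ => exact hshape.elim
      | natom _ => exact hshape.elim
      | conj _ _ => exact hshape.elim
      | disj _ _ => exact hshape.elim
      | next _ => exact hshape.elim
      | untl _ _ => exact hshape.elim
  have h2 : ∀ ψ ∈ R, RsatCond w ψ := fun ψ hψ => key (sizeOf ψ) ψ hψ (le_refl _)
  exact ⟨fun ψ hψ => ⟨hR hψ, h2 ψ hψ⟩, h2⟩

end Paper

end
end

section
/- Let A be a finite nonempty set, (a_j)_{j≥0} a sequence of elements of A, and q, r_1, …, r_n : A → ℝ. Then there exists a strictly increasing sequence (T_ℓ)_{ℓ≥1} of positive integers such that: (i) for every a ∈ A the limit f(a) := lim_{ℓ→∞} (1/T_ℓ) Σ_{j<T_ℓ} 𝟙[a_j = a] exists and is nonnegative; (ii) Σ_{a∈A} f(a) = 1; (iii) Σ_{a∈A} f(a)·q(a) = limsup_{i→∞} (1/i) Σ_{j<i} q(a_j); and (iv) Σ_{a∈A} f(a)·r_k(a) ≥ liminf_{i→∞} (1/i) Σ_{j<i} r_k(a_j) for each 1 ≤ k ≤ n. -/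
open Filter

attribute [local instance] Classical.propDecidable

noncomputable section

namespace Paper

theorem cesaro_abs_le (p : ℕ → ℝ) (M : ℝ) (h : ∀ j, |p j| ≤ M) (nn : ℕ) :
    |cesaro p nn| ≤ M := by
  have hM : 0 ≤ M := le_trans (abs_nonneg _) (h 0)
  rcases Nat.eq_zero_or_pos nn with rfl | hn
  · simpa [cesaro] using hM
  · have h1 : |∑ j ∈ Finset.range nn, p j| ≤ (nn : ℝ) * M := by
      calc |∑ j ∈ Finset.range nn, p j| ≤ ∑ j ∈ Finset.range nn, |p j| :=
            Finset.abs_sum_le_sum_abs _ _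
        _ ≤ ∑ _j ∈ Finset.range nn, M := Finset.sum_le_sum fun j _ => h j
        _ = (nn : ℝ) * M := by simp [Finset.sum_const, mul_comm]
    have hn' : (0:ℝ) < nn := by exact_mod_cast hn
    rw [cesaro, abs_div, abs_of_pos hn', div_le_iff₀ hn']
    calc |∑ j ∈ Finset.range nn, p j| ≤ (nn:ℝ) * M := h1
      _ = M * nn := mul_comm _ _

theorem freq_sum {A : Type} [Fintype A] (aseq : ℕ → A) (h : A → ℝ) (nn : ℕ) :
    ∑ a : A, ((∑ j ∈ Finset.range nn, ind (aseq j = a)) / (nn:ℝ)) * h a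
      = cesaro (fun j => h (aseq j)) nn := by
  have key : ∀ a : A, ((∑ j ∈ Finset.range nn, ind (aseq j = a)) / (nn:ℝ)) * h a
      = (∑ j ∈ Finset.range nn, ind (aseq j = a) * h a) / nn := by
    intro a; rw [div_mul_eq_mul_div, Finset.sum_mul]
  simp_rw [key]
  rw [← Finset.sum_div, Finset.sum_comm, cesaro]
  congr 1
  refine Finset.sum_congr rfl fun j _ => ?_
  simp [ind, ite_mul, Finset.sum_ite_eq]

/-- Lemma (subsequence of frequencies): along a suitable subsequence of times,
the action frequencies converge, sum to one, realize the limsup of the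
`q`-averages exactly, and dominate the liminfs of the `r_k`-averages. -/
theorem frequency_subsequence {A : Type} [Fintype A] [Nonempty A]
    (aseq : ℕ → A) (q : A → ℝ) (n : ℕ) (r : Fin n → A → ℝ) :
    ∃ T : ℕ → ℕ, StrictMono T ∧ (∀ ℓ, 0 < T ℓ) ∧
      ∃ f : A → ℝ,
        (∀ a : A, Filter.Tendsto
          (fun ℓ => (∑ j ∈ Finset.range (T ℓ), ind (aseq j = a)) / (T ℓ : ℝ))
          Filter.atTop (nhds (f a))) ∧
        (∀ a : A, 0 ≤ f a) ∧
        (∑ a : A, f a = 1) ∧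
        (∑ a : A, f a * q a
          = Filter.limsup (cesaro (fun j => q (aseq j))) Filter.atTop) ∧
        (∀ k : Fin n, ∑ a : A, f a * r k a
          ≥ Filter.liminf (cesaro (fun j => r k (aseq j))) Filter.atTop) := by
  classical
  set u : ℕ → ℝ := cesaro (fun j => q (aseq j)) with hu_def
  obtain ⟨Mq, hMq⟩ : ∃ M, ∀ j, |q (aseq j)| ≤ M :=
    ⟨Finset.univ.sup' Finset.univ_nonempty (fun a => |q a|),
     fun j => Finset.le_sup' (fun a => |q a|) (Finset.mem_univ (aseq j))⟩
  have hub : ∀ nn, |u nn| ≤ Mq := fun nn => cesaro_abs_le _ _ hMq nn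
  have hbdd_le : Filter.IsBoundedUnder (· ≤ ·) atTop u :=
    Filter.isBoundedUnder_of ⟨Mq, fun nn => (abs_le.1 (hub nn)).2⟩
  have hbdd_ge : Filter.IsBoundedUnder (· ≥ ·) atTop u :=
    Filter.isBoundedUnder_of ⟨-Mq, fun nn => (abs_le.1 (hub nn)).1⟩
  set L : ℝ := Filter.limsup u atTop with hL_def
  have hfreq : ∀ m : ℕ, ∃ᶠ nn in atTop, |u nn - L| < 1/((m:ℝ)+1) := by
    intro m
    have hε : (0:ℝ) < 1/((m:ℝ)+1) := by positivity
    have h1 : ∃ᶠ nn in atTop, L - 1/((m:ℝ)+1) < u nn :=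
      Filter.frequently_lt_of_lt_limsup hbdd_ge.isCoboundedUnder_le (by linarith)
    have h2 : ∀ᶠ nn in atTop, u nn < L + 1/((m:ℝ)+1) :=
      Filter.eventually_lt_of_limsup_lt (by linarith) hbdd_le
    refine (h1.and_eventually h2).mono fun nn hnn => ?_
    rw [abs_sub_lt_iff]; constructor <;> linarith [hnn.1, hnn.2]
  obtain ⟨s, hsmono, hs⟩ := Filter.extraction_forall_of_frequently hfreq
  have hUs : Filter.Tendsto (fun m => u (s m)) atTop (nhds L) := by
    rw [← tendsto_sub_nhds_zero_iff]
    apply squeeze_zero_norm (fun m => (hs m).le)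
    exact tendsto_one_div_add_atTop_nhds_zero_nat
  set g : ℕ → A → ℝ := fun nn a => (∑ j ∈ Finset.range nn, ind (aseq j = a)) / (nn:ℝ)
    with hg_def
  have hg0 : ∀ nn a, 0 ≤ g nn a := by
    intro nn a
    apply div_nonneg _ (Nat.cast_nonneg nn)
    exact Finset.sum_nonneg fun j _ => by unfold ind; positivity
  have hg1 : ∀ nn a, g nn a ≤ 1 := by
    intro nn a
    rcases Nat.eq_zero_or_pos nn with rfl | hn
    · simp [hg_def]
    · have hn' : (0:ℝ) < nn := by exact_mod_cast hn
      rw [hg_def, div_le_one hn']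
      calc ∑ j ∈ Finset.range nn, ind (aseq j = a)
          ≤ ∑ _j ∈ Finset.range nn, (1:ℝ) :=
            Finset.sum_le_sum fun j _ => by unfold ind; split <;> norm_num
        _ = nn := by simp
  have hK : IsCompact (Set.pi Set.univ fun _ : A => Set.Icc (0:ℝ) 1) :=
    isCompact_univ_pi fun _ => isCompact_Icc
  obtain ⟨f, _hfK, φ1, hφ1mono, hφ1tend⟩ :=
    hK.tendsto_subseq (x := fun m => g (s m))
      (fun m => by intro a _; exact ⟨hg0 _ _, hg1 _ _⟩)
  have hcomp : ∀ a : A, Filter.Tendsto (fun m => g (s (φ1 m)) a) atTop (nhds (f a)) :=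
    fun a => tendsto_pi_nhds.1 hφ1tend a
  set T : ℕ → ℕ := fun ℓ => s (φ1 (ℓ+1)) with hT_def
  have hTmono : StrictMono T := fun a b hab => hsmono (hφ1mono (by omega))
  have hshift : Filter.Tendsto (fun ℓ : ℕ => ℓ + 1) atTop atTop :=
    tendsto_add_atTop_nat 1
  have hgT : ∀ a : A, Filter.Tendsto (fun ℓ => g (T ℓ) a) atTop (nhds (f a)) :=
    fun a => (hcomp a).comp hshift
  have hTat : Filter.Tendsto T atTop atTop :=
    hTmono.tendsto_atTop
  have huT : Filter.Tendsto (fun ℓ => u (T ℓ)) atTop (nhds L) :=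
    hUs.comp (hφ1mono.tendsto_atTop.comp hshift)
  have hTpos : ∀ ℓ, 0 < T ℓ := by
    intro ℓ
    have h1 : φ1 (ℓ+1) ≤ s (φ1 (ℓ+1)) := hsmono.le_apply
    have h2 : ℓ + 1 ≤ φ1 (ℓ+1) := hφ1mono.le_apply
    simp only [hT_def]
    omega
  refine ⟨T, hTmono, hTpos, f, hgT, ?_, ?_, ?_, ?_⟩
  · exact fun a => ge_of_tendsto' (hgT a) fun ℓ => hg0 _ _
  · have h1 : Filter.Tendsto (fun ℓ => ∑ a : A, g (T ℓ) a) atTop (nhds (∑ a : A, f a)) :=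
      tendsto_finset_sum _ fun a _ => hgT a
    have h2 : (fun ℓ => ∑ a : A, g (T ℓ) a) = fun _ => (1:ℝ) := by
      funext ℓ
      have := freq_sum aseq (fun _ => (1:ℝ)) (T ℓ)
      simp only [mul_one] at this
      rw [hg_def]
      rw [this, cesaro]
      have hp : (0:ℝ) < T ℓ := by exact_mod_cast hTpos ℓ
      field_simp
      simp
    rw [h2] at h1
    exact tendsto_nhds_unique h1 tendsto_const_nhds
  · have h1 : Filter.Tendsto (fun ℓ => ∑ a : A, g (T ℓ) a * q a) atTop
        (nhds (∑ a : A, f a * q a)) :=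
      tendsto_finset_sum _ fun a _ => (hgT a).mul_const (q a)
    have h2 : (fun ℓ => ∑ a : A, g (T ℓ) a * q a) = fun ℓ => u (T ℓ) := by
      funext ℓ; exact freq_sum aseq q (T ℓ)
    rw [h2] at h1
    exact tendsto_nhds_unique h1 huT
  · intro k
    set v : ℕ → ℝ := cesaro (fun j => r k (aseq j)) with hv_def
    obtain ⟨Mr, hMr⟩ : ∃ M, ∀ j, |r k (aseq j)| ≤ M :=
      ⟨Finset.univ.sup' Finset.univ_nonempty (fun a => |r k a|),
       fun j => Finset.le_sup' (fun a => |r k a|) (Finset.mem_univ (aseq j))⟩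
    have hvb : Filter.IsBoundedUnder (· ≥ ·) atTop v :=
      Filter.isBoundedUnder_of ⟨-Mr, fun nn => (abs_le.1 (cesaro_abs_le _ _ hMr nn)).1⟩
    have hvT : Filter.Tendsto (fun ℓ => v (T ℓ)) atTop (nhds (∑ a : A, f a * r k a)) := by
      have h1 : Filter.Tendsto (fun ℓ => ∑ a : A, g (T ℓ) a * r k a) atTop
          (nhds (∑ a : A, f a * r k a)) :=
        tendsto_finset_sum _ fun a _ => (hgT a).mul_const (r k a)
      have h2 : (fun ℓ => ∑ a : A, g (T ℓ) a * r k a) = fun ℓ => v (T ℓ) := by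
        funext ℓ; exact freq_sum aseq (r k) (T ℓ)
      rwa [h2] at h1
    set x : ℝ := ∑ a : A, f a * r k a
    have key : ∀ ε > (0:ℝ), Filter.liminf v atTop ≤ x + ε := by
      intro ε hε
      have hev : ∀ᶠ ℓ in atTop, v (T ℓ) ≤ x + ε :=
        hvT.eventually (eventually_le_nhds (by linarith))
      have hfr : ∃ᶠ nn in atTop, v nn ≤ x + ε := hTat.frequently hev.frequently
      exact Filter.liminf_le_of_frequently_le hfr hvb
    exact le_of_forall_pos_le_add key

end Paper

end
end

section
/- For every bounded sequence a : ℕ → ℝ, the liminf and limsup of the Cesàro averages are shift-invariant: liminf_{n→∞} (1/n) Σ_{j<n} a_{j+1} = liminf_{n→∞} (1/n) Σ_{j<n} a_j and limsup_{n→∞} (1/n) Σ_{j<n} a_{j+1} = limsup_{n→∞} (1/n) Σ_{j<n} a_j. Consequently, for every infinite word w over 2^{Ap} and every fLTL formula ψ: w ⊨ G^{⋈p}_ext ψ if and only if w^1 ⊨ G^{⋈p}_ext ψ. -/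
open Filter

attribute [local instance] Classical.propDecidable

noncomputable section

namespace Paper

lemma aux_shift {u v : ℕ → ℝ} (hu : ∃ C, ∀ n, |u n| ≤ C)
    (hv : Filter.Tendsto v Filter.atTop (nhds 0)) :
    Filter.limsup (u + v) Filter.atTop = Filter.limsup u Filter.atTop ∧
    Filter.liminf (u + v) Filter.atTop = Filter.liminf u Filter.atTop := by
  obtain ⟨C, hC⟩ := hu
  have hub : IsBoundedUnder (· ≤ ·) atTop u :=
    isBoundedUnder_of ⟨C, fun n => (abs_le.1 (hC n)).2⟩
  have hlb : IsBoundedUnder (· ≥ ·) atTop u :=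
    isBoundedUnder_of ⟨-C, fun n => (abs_le.1 (hC n)).1⟩
  have hvub : IsBoundedUnder (· ≤ ·) atTop v := hv.isBoundedUnder_le
  have hvlb : IsBoundedUnder (· ≥ ·) atTop v := hv.isBoundedUnder_ge
  have hvsup : limsup v atTop = 0 := hv.limsup_eq
  have hvinf : liminf v atTop = 0 := hv.liminf_eq
  constructor
  · apply le_antisymm
    · have := limsup_add_le (u := u) (v := v) hlb hub hvlb.isCoboundedUnder_le hvub
      rwa [hvsup, add_zero] at this
    · have := le_limsup_add (u := u) (v := v) hub hlb.isCoboundedUnder_le hvub hvlb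
      rwa [hvinf, add_zero] at this
  · apply le_antisymm
    · have := liminf_add_le (u := v) (v := u) hvlb hvub hlb hub.isCoboundedUnder_ge
      rw [hvsup, zero_add] at this
      rwa [add_comm] at this
    · have := le_liminf_add (u := u) (v := v) hlb hub hvlb hvub.isCoboundedUnder_ge
      rwa [hvinf, add_zero] at this

lemma cesaro_shift_aux (a : ℕ → ℝ) (hb : ∃ C, ∀ j, |a j| ≤ C) :
    Filter.limsup (cesaro (fun j => a (j + 1))) Filter.atTop
        = Filter.limsup (cesaro a) Filter.atTop ∧
    Filter.liminf (cesaro (fun j => a (j + 1))) Filter.atTop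
        = Filter.liminf (cesaro a) Filter.atTop := by
  obtain ⟨C, hC⟩ := hb
  have hC0 : 0 ≤ C := le_trans (abs_nonneg _) (hC 0)
  set v : ℕ → ℝ := fun n => (a n - a 0) / n with hv
  have hsum : ∀ n, cesaro (fun j => a (j + 1)) n = cesaro a n + v n := by
    intro n
    have h1 : ∑ j ∈ Finset.range n, a (j + 1)
        = (∑ j ∈ Finset.range n, a j) + a n - a 0 := by
      have := Finset.sum_range_succ' a n
      have h2 := Finset.sum_range_succ a n
      rw [h2] at this
      linarith
    simp only [cesaro, hv, h1]
    ring
  have hfun : cesaro (fun j => a (j + 1)) = cesaro a + v := funext hsum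
  have hbound : ∃ C', ∀ n, |cesaro a n| ≤ C' := by
    refine ⟨C, fun n => ?_⟩
    rcases Nat.eq_zero_or_pos n with h | h
    · simp [cesaro, h, hC0]
    · have h1 : |∑ j ∈ Finset.range n, a j| ≤ n * C := by
        calc |∑ j ∈ Finset.range n, a j| ≤ ∑ j ∈ Finset.range n, |a j| :=
              Finset.abs_sum_le_sum_abs _ _
          _ ≤ ∑ _j ∈ Finset.range n, C := Finset.sum_le_sum fun j _ => hC j
          _ = n * C := by simp [mul_comm]
      have hn : (0 : ℝ) < n := by exact_mod_cast h
      rw [cesaro, abs_div, abs_of_pos hn, div_le_iff₀ hn]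
      linarith [h1]
  have htend : Filter.Tendsto v Filter.atTop (nhds 0) := by
    refine squeeze_zero_norm' ?_ (tendsto_const_div_atTop_nhds_zero_nat (2 * C))
    filter_upwards [Filter.eventually_ge_atTop 1] with n hn
    have hn' : (0 : ℝ) < n := by exact_mod_cast hn
    rw [Real.norm_eq_abs, hv, abs_div, abs_of_pos hn']
    gcongr
    calc |a n - a 0| ≤ |a n| + |a 0| := abs_sub _ _
      _ ≤ 2 * C := by linarith [hC n, hC 0]
  rw [hfun]
  exact ⟨(aux_shift hbound htend).1, (aux_shift hbound htend).2⟩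

/-- Shift invariance of Cesàro liminf/limsup for bounded sequences, and hence
of the frequency-globally operators. -/
theorem cesaro_shift_invariant {Ap : Type} [Fintype Ap] :
    (∀ a : ℕ → ℝ, (∃ C, ∀ j, |a j| ≤ C) →
      Filter.liminf (cesaro (fun j => a (j + 1))) Filter.atTop
          = Filter.liminf (cesaro a) Filter.atTop ∧
      Filter.limsup (cesaro (fun j => a (j + 1))) Filter.atTop
          = Filter.limsup (cesaro a) Filter.atTop) ∧
    (∀ (w : Word Ap) (ψ : FLTL Ap) (e : Ext) (c : Cmp) (p : ℚ),
      Sat (.freq e c p ψ) w ↔ Sat (.freq e c p ψ) (suffixW w 1)) := by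
  refine ⟨fun a ha => ⟨(cesaro_shift_aux a ha).2, (cesaro_shift_aux a ha).1⟩,
    fun w ψ e c p => ?_⟩
  have hsuf : ∀ i, suffixW (suffixW w 1) i = suffixW w (i + 1) := by
    intro i; funext j; simp only [suffixW]; ring_nf
  have hseq : (fun i => ind (Sat ψ (suffixW (suffixW w 1) i)))
      = (fun i => ind (Sat ψ (suffixW w (i + 1)))) := by
    funext i; rw [hsuf i]
  have hb : ∃ C, ∀ j, |ind (Sat ψ (suffixW w j))| ≤ C := by
    refine ⟨1, fun j => ?_⟩
    unfold ind
    split <;> simp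
  have key : lr e (fun i => ind (Sat ψ (suffixW (suffixW w 1) i)))
      = lr e (fun i => ind (Sat ψ (suffixW w i))) := by
    rw [hseq]
    cases e with
    | inf => exact (cesaro_shift_aux _ hb).2
    | sup => exact (cesaro_shift_aux _ hb).1
  show c.rel (lr e fun i => ind (Sat ψ (suffixW w i))) p ↔
    c.rel (lr e fun i => ind (Sat ψ (suffixW (suffixW w 1) i))) p
  rw [key]

end Paper

end
end
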